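/- If ρ_AB = Σ_j p_j |ψ_j⟩⟨ψ_j| has decreasing eigenvalues p_j and U is any unitary, then Tr((I_A ⊗ |0⟩⟨0|_B) U ρ_AB U†) ≤ Σ_{j=1}^{d_A} p_j, where d_A = dim H_A; i.e., the optimal trash-state overlap is at most the sum of the d_A largest eigenvalues. -/

import Mathlib

open Matrix Kronecker Finset ComplexOrder

noncomputable section
namespace QAE

/-- Partial trace over the second tensor factor. -/
def ptraceB {A B : Type*} [Fintype B] (ρ : Matrix (A × B) (A × B) ℂ) : Matrix A A ℂ :=
  Matrix.of fun i j => ∑ k : B, ρ (i, k) (j, k)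

/-- Partial trace over the first tensor factor. -/
def ptraceA {A B : Type*} [Fintype A] (ρ : Matrix (A × B) (A × B) ℂ) : Matrix B B ℂ :=
  Matrix.of fun i j => ∑ k : A, ρ (k, i) (k, j)

/-- Outer product |v⟩⟨v|. -/
def outer {A : Type*} (v : A → ℂ) : Matrix A A ℂ := Matrix.vecMulVec v (star v)

/-- The positive semidefinite square root `U √D Uᴴ` (formerly `Matrix.PosSemidef.sqrt`). -/
def psdSqrt {n : Type*} [Fintype n] [DecidableEq n] {σ : Matrix n n ℂ} (hσ : σ.PosSemidef) :
    Matrix n n ℂ :=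
  (hσ.1.eigenvectorUnitary : Matrix n n ℂ) * diagonal ((↑) ∘ Real.sqrt ∘ hσ.1.eigenvalues) *
    (star hσ.1.eigenvectorUnitary : Matrix n n ℂ)

lemma psdSqrt_posSemidef {n : Type*} [Fintype n] [DecidableEq n] {σ : Matrix n n ℂ}
    (hσ : σ.PosSemidef) : (psdSqrt hσ).PosSemidef := by
  have hD : (diagonal ((↑) ∘ Real.sqrt ∘ hσ.1.eigenvalues : n → ℂ)).PosSemidef := by
    rw [posSemidef_diagonal_iff]
    intro i
    simp [Real.sqrt_nonneg]
  exact hD.mul_mul_conjTranspose_same (hσ.1.eigenvectorUnitary : Matrix n n ℂ)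

lemma sandwich_psd {n : Type*} [Fintype n] [DecidableEq n] {ρ σ : Matrix n n ℂ}
    (hρ : ρ.PosSemidef) (hσ : σ.PosSemidef) :
    (psdSqrt hσ * ρ * psdSqrt hσ).PosSemidef := by
  have h := hρ.mul_mul_conjTranspose_same (psdSqrt hσ)
  rwa [(psdSqrt_posSemidef hσ).isHermitian.eq] at h

-- Squared Uhlmann fidelity F(ρ,σ) = (Tr √(σ^{1/2} ρ σ^{1/2}))².
open Classical in
def sqFidelity {n : Type*} [Fintype n] [DecidableEq n] (ρ σ : Matrix n n ℂ) : ℝ :=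
  if h : ρ.PosSemidef ∧ σ.PosSemidef then
    ((psdSqrt (sandwich_psd h.1 h.2)).trace).re ^ 2
  else 0

/-- A density matrix: positive semidefinite with unit trace. -/
def IsDensity {n : Type*} [Fintype n] [DecidableEq n] (ρ : Matrix n n ℂ) : Prop :=
  ρ.PosSemidef ∧ ρ.trace = 1

end QAE
end


section Aux

open Matrix Kronecker Finset ComplexOrder

lemma aux_outer_herm {n : Type*} (v : n → ℂ) : (QAE.outer v)ᴴ = QAE.outer v := by
  ext i j
  simp [QAE.outer, Matrix.vecMulVec_apply, mul_comm]

lemma aux_outer_mul_outer {n : Type*} [Fintype n] (a b : n → ℂ) :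
    QAE.outer a * QAE.outer b = (star a ⬝ᵥ b) • Matrix.vecMulVec a (star b) := by
  ext i j
  simp only [QAE.outer, Matrix.mul_apply, Matrix.vecMulVec_apply, Matrix.smul_apply,
    dotProduct, Finset.sum_mul, smul_eq_mul, Pi.star_apply]
  exact Finset.sum_congr rfl fun x _ => by ring

lemma aux_trace_mul_outer {n : Type*} [Fintype n] (M : Matrix n n ℂ) (v : n → ℂ) :
    (M * QAE.outer v).trace = star v ⬝ᵥ (M *ᵥ v) := by
  simp only [Matrix.trace, Matrix.diag_apply, Matrix.mul_apply, QAE.outer,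
    Matrix.vecMulVec_apply, dotProduct, Matrix.mulVec, Pi.star_apply]
  exact Finset.sum_congr rfl fun x _ => by
    rw [Finset.mul_sum]; exact Finset.sum_congr rfl fun y _ => by ring

lemma aux_trace_nonneg {n : Type*} [Fintype n] [DecidableEq n] {M : Matrix n n ℂ}
    (h : M.PosSemidef) : 0 ≤ M.trace := by
  refine Finset.sum_nonneg fun i _ => ?_
  have := h.dotProduct_mulVec_nonneg (Pi.single i 1)
  simpa [Matrix.mulVec_single, dotProduct, Pi.single_apply, apply_ite] using this

lemma aux_kron_conjT {A B : Type*} (M : Matrix A A ℂ) (N : Matrix B B ℂ) :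
    (M ⊗ₖ N)ᴴ = Mᴴ ⊗ₖ Nᴴ := by
  ext ⟨i1, i2⟩ ⟨j1, j2⟩
  simp [Matrix.conjTranspose_apply, mul_comm]

lemma aux_card_lt {k d : ℕ} (h : d < k) :
    (Finset.univ.filter fun j : Fin k => (j : ℕ) < d).card = d := by
  have : (Finset.univ.filter fun j : Fin k => (j : ℕ) < d) = Finset.Iio (⟨d, h⟩ : Fin k) := by
    ext j; simp [Fin.lt_def]
  rw [this, Fin.card_Iio]

lemma aux_key {k d : ℕ} (p q : Fin k → ℝ) (hpa : Antitone p) (hp0 : ∀ j, 0 ≤ p j)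
    (hq0 : ∀ j, 0 ≤ q j) (hq1 : ∀ j, q j ≤ 1) (hqs : ∑ j, q j ≤ (d : ℝ)) :
    ∑ j, p j * q j ≤ ∑ j ∈ Finset.univ.filter (fun j : Fin k => (j : ℕ) < d), p j := by
  by_cases h : d < k
  · set t := p ⟨d, h⟩ with ht
    have ht0 : 0 ≤ t := hp0 _
    have hcard : (Finset.univ.filter fun j : Fin k => (j : ℕ) < d).card = d := aux_card_lt h
    have step1 : ∑ j, p j * q j
        ≤ (∑ j ∈ Finset.univ.filter (fun j : Fin k => (j : ℕ) < d), (p j - t + t * q j))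
          + ∑ j ∈ Finset.univ.filter (fun j : Fin k => ¬ (j : ℕ) < d), t * q j := by
      rw [← Finset.sum_filter_add_sum_filter_not Finset.univ (fun j : Fin k => (j : ℕ) < d)
        (fun j => p j * q j)]
      refine add_le_add (Finset.sum_le_sum fun j hj => ?_) (Finset.sum_le_sum fun j hj => ?_)
      · have hjd : (j : ℕ) < d := (Finset.mem_filter.mp hj).2
        have hpt : t ≤ p j := hpa (by exact Fin.le_def.mpr (le_of_lt hjd))
        nlinarith [hq1 j, hq0 j]
      · have hjd : d ≤ (j : ℕ) := not_lt.mp (Finset.mem_filter.mp hj).2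
        have hpt : p j ≤ t := hpa (by exact Fin.le_def.mpr hjd)
        exact mul_le_mul_of_nonneg_right hpt (hq0 j)
    have step2 : (∑ j ∈ Finset.univ.filter (fun j : Fin k => (j : ℕ) < d), (p j - t + t * q j))
          + ∑ j ∈ Finset.univ.filter (fun j : Fin k => ¬ (j : ℕ) < d), t * q j
        = (∑ j ∈ Finset.univ.filter (fun j : Fin k => (j : ℕ) < d), p j)
          - t * d + t * ∑ j, q j := by
      rw [← Finset.sum_filter_add_sum_filter_not Finset.univ (fun j : Fin k => (j : ℕ) < d) q]
      simp only [Finset.sum_add_distrib, Finset.sum_sub_distrib, Finset.sum_const, hcard,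
        ← Finset.mul_sum, nsmul_eq_mul]
      ring
    calc ∑ j, p j * q j ≤ _ := step1
      _ = _ := step2
      _ ≤ ∑ j ∈ Finset.univ.filter (fun j : Fin k => (j : ℕ) < d), p j := by nlinarith
  · have hfull : (Finset.univ.filter fun j : Fin k => (j : ℕ) < d) = Finset.univ := by
      ext j; simp only [Finset.mem_filter, Finset.mem_univ, true_and, iff_true]
      exact lt_of_lt_of_le j.isLt (not_lt.mp h)
    rw [hfull]
    exact Finset.sum_le_sum fun j _ => by nlinarith [hq1 j, hq0 j, hp0 j]

end Aux

/-- the optimal trash overlap is at most the sum of the d_A largest eigenvalues. -/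
theorem stmt9 {A B : Type*} [Fintype A] [Fintype B] [DecidableEq A] [DecidableEq B]
    {k : ℕ} (p : Fin k → ℝ) (hpa : Antitone p) (hp0 : ∀ j, 0 ≤ p j) (hp1 : ∑ j, p j = 1)
    (ψ : Fin k → (A × B) → ℂ)
    (hψ : ∀ i j, star (ψ i) ⬝ᵥ ψ j = if i = j then 1 else 0)
    (ρAB : Matrix (A × B) (A × B) ℂ) (hρ : ρAB = ∑ j, (p j : ℂ) • QAE.outer (ψ j))
    (U : Matrix (A × B) (A × B) ℂ) (hU : Uᴴ * U = 1 ∧ U * Uᴴ = 1)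
    (b0 : B → ℂ) (hb0 : star b0 ⬝ᵥ b0 = 1) :
    ((((1 : Matrix A A ℂ) ⊗ₖ QAE.outer b0) * (U * ρAB * Uᴴ)).trace).re
      ≤ ∑ j ∈ Finset.univ.filter (fun j : Fin k => (j : ℕ) < Fintype.card A), p j := by
  obtain ⟨hU1, hU2⟩ := hU
  set P₀ : Matrix (A × B) (A × B) ℂ := (1 : Matrix A A ℂ) ⊗ₖ QAE.outer b0 with hP₀
  set Q : Matrix (A × B) (A × B) ℂ := Uᴴ * P₀ * U with hQ
  -- P₀ is a Hermitian projection
  have hP0herm : P₀ᴴ = P₀ := by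
    rw [hP₀, aux_kron_conjT, Matrix.conjTranspose_one, aux_outer_herm]
  have hP0idem : P₀ * P₀ = P₀ := by
    rw [hP₀, ← Matrix.mul_kronecker_mul, one_mul, aux_outer_mul_outer, hb0, one_smul]
    rfl
  -- Q is a Hermitian projection, hence PSD with 1 - Q PSD
  have hQpsd : Q.PosSemidef := by
    have h := Matrix.posSemidef_conjTranspose_mul_self (P₀ * U)
    have e : (P₀ * U)ᴴ * (P₀ * U) = Q := by
      rw [Matrix.conjTranspose_mul, hP0herm, hQ, Matrix.mul_assoc,
        ← Matrix.mul_assoc P₀, hP0idem, ← Matrix.mul_assoc]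
    rwa [e] at h
  have hQherm : Qᴴ = Q := hQpsd.1
  have hQidem : Q * Q = Q := by
    have h2 : U * (Uᴴ * (P₀ * U)) = P₀ * U := by
      rw [← Matrix.mul_assoc, hU2, one_mul]
    calc Q * Q = Uᴴ * (P₀ * (U * (Uᴴ * (P₀ * U)))) := by
          rw [hQ]; simp only [Matrix.mul_assoc]
      _ = Uᴴ * (P₀ * (P₀ * U)) := by rw [h2]
      _ = Q := by rw [← Matrix.mul_assoc P₀, hP0idem, hQ]; simp only [Matrix.mul_assoc]
  have h1Qpsd : ((1 : Matrix (A × B) (A × B) ℂ) - Q).PosSemidef := by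
    have h := Matrix.posSemidef_conjTranspose_mul_self ((1 : Matrix (A × B) (A × B) ℂ) - Q)
    have e : ((1 : Matrix (A × B) (A × B) ℂ) - Q)ᴴ * (1 - Q) = 1 - Q := by
      rw [Matrix.conjTranspose_sub, Matrix.conjTranspose_one, hQherm,
        Matrix.sub_mul, Matrix.mul_sub, Matrix.mul_sub, hQidem, Matrix.one_mul, Matrix.mul_one]
      simp
    rwa [e] at h
  -- the quantities q j
  set c : Fin k → ℂ := fun j => star (ψ j) ⬝ᵥ (Q *ᵥ ψ j) with hc
  set q : Fin k → ℝ := fun j => (c j).re with hqdef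
  have hc0 : ∀ j, 0 ≤ c j := fun j => hQpsd.dotProduct_mulVec_nonneg (ψ j)
  have hcim : ∀ j, (c j).im = 0 := fun j => ((Complex.le_def.mp (hc0 j)).2).symm
  have hq0 : ∀ j, 0 ≤ q j := fun j => (Complex.le_def.mp (hc0 j)).1
  have hq1 : ∀ j, q j ≤ 1 := by
    intro j
    have h := h1Qpsd.dotProduct_mulVec_nonneg (ψ j)
    have e : star (ψ j) ⬝ᵥ (((1 : Matrix (A × B) (A × B) ℂ) - Q) *ᵥ ψ j) = 1 - c j := by
      rw [Matrix.sub_mulVec, dotProduct_sub, Matrix.one_mulVec, hψ j j]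
      simp
      rfl
    rw [e] at h
    have h1 : (0:ℝ) ≤ 1 - q j := by
      simpa [Complex.sub_re] using (Complex.le_def.mp h).1
    linarith
  -- the trace as ∑ p j * q j
  have hcyc : (P₀ * (U * ρAB * Uᴴ)).trace = (Q * ρAB).trace := by
    rw [show P₀ * (U * ρAB * Uᴴ) = (P₀ * U * ρAB) * Uᴴ by simp only [Matrix.mul_assoc],
      Matrix.trace_mul_comm, hQ]
    simp only [Matrix.mul_assoc]
  have htr : (Q * ρAB).trace = ∑ j, (p j : ℂ) * c j := by
    rw [hρ, Matrix.mul_sum, Matrix.trace_sum]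
    exact Finset.sum_congr rfl fun j _ => by
      rw [Matrix.mul_smul, Matrix.trace_smul, aux_trace_mul_outer, smul_eq_mul]
  have hlhs : ((P₀ * (U * ρAB * Uᴴ)).trace).re = ∑ j, p j * q j := by
    rw [hcyc, htr, Complex.re_sum]
    exact Finset.sum_congr rfl fun j _ => by
      rw [Complex.mul_re, Complex.ofReal_re, Complex.ofReal_im, hcim j]
      ring
  -- sum of the q j is at most card A
  set S : Matrix (A × B) (A × B) ℂ := ∑ j, QAE.outer (ψ j) with hS
  have hSherm : Sᴴ = S := by
    rw [hS, Matrix.conjTranspose_sum]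
    exact Finset.sum_congr rfl fun j _ => aux_outer_herm (ψ j)
  have houter : ∀ i j, QAE.outer (ψ i) * QAE.outer (ψ j)
      = if i = j then QAE.outer (ψ i) else 0 := by
    intro i j
    rw [aux_outer_mul_outer, hψ]
    by_cases h : i = j
    · subst h; simp [QAE.outer]
    · simp [h]
  have hSidem : S * S = S := by
    rw [hS, Finset.sum_mul_sum]
    simp only [houter]
    rw [Finset.sum_congr rfl fun i (_ : i ∈ Finset.univ) => Finset.sum_ite_eq Finset.univ i
      (fun _ => QAE.outer (ψ i))]
    simp
  have h1Spsd_tr : 0 ≤ (Q * ((1 : Matrix (A × B) (A × B) ℂ) - S)).trace := by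
    set T : Matrix (A × B) (A × B) ℂ := 1 - S with hT
    have hTherm : Tᴴ = T := by
      rw [hT, Matrix.conjTranspose_sub, Matrix.conjTranspose_one, hSherm]
    have hTidem : T * T = T := by
      rw [hT, Matrix.sub_mul, Matrix.mul_sub, Matrix.mul_sub, hSidem, Matrix.one_mul,
        Matrix.mul_one]
      simp
    have e : (Q * T).trace = (Tᴴ * Q * T).trace := by
      rw [hTherm, ← hTidem, show Q * (T * T) = (Q * T) * T by simp only [Matrix.mul_assoc],
        Matrix.trace_mul_comm, ← Matrix.mul_assoc, hTidem]
    rw [e]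
    exact aux_trace_nonneg (hQpsd.conjTranspose_mul_mul_same T)
  have hTrQ : Q.trace = (Fintype.card A : ℂ) := by
    have : Q.trace = P₀.trace := by
      rw [hQ, Matrix.trace_mul_comm, ← Matrix.mul_assoc, hU2, one_mul]
    rw [this, hP₀, Matrix.trace_kronecker, Matrix.trace_one]
    have : (QAE.outer b0).trace = 1 := by
      rw [← hb0]
      simp only [Matrix.trace, Matrix.diag_apply, QAE.outer, Matrix.vecMulVec_apply,
        dotProduct, Pi.star_apply]
      exact Finset.sum_congr rfl fun i _ => mul_comm _ _
    rw [this, mul_one]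
  have hsumc : ∑ j, c j = (Q * S).trace := by
    rw [hS, Matrix.mul_sum, Matrix.trace_sum]
    exact Finset.sum_congr rfl fun j _ => (aux_trace_mul_outer Q (ψ j)).symm
  have hsplit : (Q * S).trace = Q.trace - (Q * ((1 : Matrix (A × B) (A × B) ℂ) - S)).trace := by
    rw [Matrix.mul_sub, mul_one, Matrix.trace_sub]
    ring
  have hqs : ∑ j, q j ≤ (Fintype.card A : ℝ) := by
    have h1 : (∑ j, c j).re = ∑ j, q j := Complex.re_sum _ _
    have h2 : ((Q * ((1 : Matrix (A × B) (A × B) ℂ) - S)).trace).re ≥ 0 :=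
      (Complex.le_def.mp h1Spsd_tr).1
    have h3 : (∑ j, c j).re = (Fintype.card A : ℝ)
        - ((Q * ((1 : Matrix (A × B) (A × B) ℂ) - S)).trace).re := by
      rw [hsumc, hsplit, Complex.sub_re, hTrQ]
      norm_num
    rw [← h1, h3]
    linarith
  rw [hlhs]
  exact aux_key p q hpa hp0 hq0 hq1 hqs
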